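/- Let α, β > 0 and γ ≥ 0, and let (u,f) be a twice continuously differentiable solution on (0,∞) of u'' = (αβ/2) f² u + u(u²−1)/r² and f'' = −(2/r) f' + (β/r²) f u² + γ f(f²−1), with 0 < u(r) < 1 and 0 < f(r) < 1 for all r > 0, lim_{r→0} u(r) = 1 and lim_{r→0} f(r) = 0. Set σ = √(1/4 + β) − 1/2. Then for every ε ∈ (0,1) there exist constants C > 0 and δ > 0 such that f(r) ≤ C·r^{σ(1−ε)} for all r ∈ (0,δ). -/

import Mathlib

open MeasureTheory Filter Set Topology

noncomputable section

/-- `(u,f)` is a (twice continuously differentiable) classical solution on `(0,∞)` of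
`u'' = (αβ/2) f² u + u(u²−1)/r²` and `f'' = −(2/r) f' + (β/r²) f u² + γ f(f²−1)`,
with first derivatives `u'`, `f'`. -/
def SolvesODE (α β γ : ℝ) (u u' f f' : ℝ → ℝ) : Prop :=
  ∀ r : ℝ, 0 < r →
    HasDerivAt u (u' r) r ∧ HasDerivAt f (f' r) r ∧
    HasDerivAt u' (α * β / 2 * f r ^ 2 * u r + u r * (u r ^ 2 - 1) / r ^ 2) r ∧
    HasDerivAt f' (-(2 / r) * f' r + β / r ^ 2 * f r * u r ^ 2
        + γ * f r * (f r ^ 2 - 1)) r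

set_option maxHeartbeats 1000000 in
/-- power-law behaviour of `f` near the origin: with
`σ = √(1/4 + β) − 1/2`, one has `f(r) ≤ C·r^{σ(1−ε)}` for `r` small. -/
theorem f_power_behavior_at_origin (α β γ : ℝ) (hα : 0 < α) (hβ : 0 < β) (hγ : 0 ≤ γ)
    (u u' f f' : ℝ → ℝ) (hsol : SolvesODE α β γ u u' f f')
    (hu01 : ∀ r : ℝ, 0 < r → 0 < u r ∧ u r < 1)
    (hf01 : ∀ r : ℝ, 0 < r → 0 < f r ∧ f r < 1)
    (hu0 : Tendsto u (𝓝[>] (0 : ℝ)) (𝓝 1))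
    (hf0 : Tendsto f (𝓝[>] (0 : ℝ)) (𝓝 0))
    (σ : ℝ) (hσ : σ = Real.sqrt (1 / 4 + β) - 1 / 2) :
    ∀ ε : ℝ, 0 < ε → ε < 1 →
      ∃ C > (0 : ℝ), ∃ δ > (0 : ℝ), ∀ r : ℝ, 0 < r → r < δ →
        f r ≤ C * r ^ (σ * (1 - ε)) := by
  intro ε hε hε1
  -- basic facts about σ
  have hsq : Real.sqrt (1 / 4 + β) ^ 2 = 1 / 4 + β := Real.sq_sqrt (by linarith)
  have hσpos : 0 < σ := by
    have h12 : (1 : ℝ) / 2 < Real.sqrt (1 / 4 + β) := by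
      nlinarith [Real.sqrt_nonneg (1 / 4 + β)]
    rw [hσ]; linarith
  have hσβ : σ ^ 2 + σ = β := by rw [hσ]; linear_combination hsq
  set p : ℝ := σ * (1 - ε) with hpdef
  have hp : 0 < p := mul_pos hσpos (by linarith)
  have hpσ : p < σ := by nlinarith [mul_pos hσpos hε]
  have hppβ : p ^ 2 + p < β := by
    have h2 : p ^ 2 < σ ^ 2 := by
      nlinarith [mul_pos (sub_pos.mpr hpσ) (show (0:ℝ) < σ + p by linarith)]
    linarith
  set k : ℝ := (p ^ 2 + p + β) / 2 with hkdef
  have hk1 : p ^ 2 + p < k := by simp only [hkdef]; linarith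
  have hk2 : k < β := by simp only [hkdef]; linarith
  -- choose δ₁ so that β * u r ^ 2 > k on (0, δ₁)
  have hut : Tendsto (fun r => β * u r ^ 2) (𝓝[>] (0 : ℝ)) (𝓝 (β * 1 ^ 2)) :=
    (hu0.pow 2).const_mul β
  have hev : ∀ᶠ r in 𝓝[>] (0 : ℝ), k < β * u r ^ 2 :=
    hut.eventually (eventually_gt_nhds (by rw [one_pow, mul_one]; linarith))
  obtain ⟨δ₁, hδ₁0, hδ₁⟩ := mem_nhdsGT_iff_exists_Ioo_subset.mp hev
  have hδ₁pos : 0 < δ₁ := hδ₁0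
  -- choose δ₂ so that γ * r ^ 2 ≤ k - (p^2 + p) on (0, δ₂]
  have he : (0:ℝ) < k - (p ^ 2 + p) := by linarith
  have heγ : (0:ℝ) < (k - (p ^ 2 + p)) / (γ + 1) := div_pos he (by linarith)
  set δ₂ : ℝ := Real.sqrt ((k - (p ^ 2 + p)) / (γ + 1)) with hδ₂def
  have hδ₂pos : 0 < δ₂ := Real.sqrt_pos.mpr heγ
  have hδ₂sq : δ₂ ^ 2 = (k - (p ^ 2 + p)) / (γ + 1) := Real.sq_sqrt heγ.le
  have hδ₂prop : γ * δ₂ ^ 2 ≤ k - (p ^ 2 + p) := by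
    rw [hδ₂sq, mul_comm, div_mul_eq_mul_div, div_le_iff₀ (by linarith : (0:ℝ) < γ + 1)]
    nlinarith [mul_nonneg hγ he.le]
  set δ : ℝ := min δ₁ δ₂ / 2 with hδdef
  have hδpos : 0 < δ := by positivity
  have hδδ₁ : δ < δ₁ := by
    have := min_le_left δ₁ δ₂; simp only [hδdef]; linarith [lt_min hδ₁pos hδ₂pos]
  have hδδ₂ : δ < δ₂ := by
    have := min_le_right δ₁ δ₂; simp only [hδdef]; linarith [lt_min hδ₁pos hδ₂pos]
  set C : ℝ := 1 / δ ^ p with hCdef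
  have hδp : (0:ℝ) < δ ^ p := Real.rpow_pos_of_pos hδpos p
  have hC : 0 < C := by positivity
  refine ⟨C, hC, δ, hδpos, ?_⟩
  by_contra hcon
  push_neg at hcon
  obtain ⟨r₀, hr₀pos, hr₀δ, hfr₀⟩ := hcon
  -- the comparison function and its derivative
  set w : ℝ → ℝ := fun r => f r - C * r ^ p with hwdef
  set W : ℝ → ℝ := fun r => f' r - C * (p * r ^ (p - 1)) with hWdef
  have hw_deriv : ∀ x : ℝ, 0 < x → HasDerivAt w (W x) x := by
    intro x hx
    exact ((hsol x hx).2.1).sub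
      ((Real.hasDerivAt_rpow_const (Or.inl hx.ne')).const_mul C)
  have hw0 : 0 < w r₀ := by simp only [hwdef]; linarith
  -- w tends to 0 at 0⁺
  have hrp0 : Tendsto (fun r : ℝ => C * r ^ p) (𝓝[>] (0 : ℝ)) (𝓝 0) := by
    have h1 : ContinuousAt (fun r : ℝ => r ^ p) 0 :=
      Real.continuousAt_rpow_const 0 p (Or.inr hp.le)
    have h2 : Tendsto (fun r : ℝ => r ^ p) (𝓝[>] (0 : ℝ)) (𝓝 ((0:ℝ) ^ p)) :=
      h1.continuousWithinAt.tendsto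
    rw [Real.zero_rpow hp.ne'] at h2
    simpa using h2.const_mul C
  have hwlim : Tendsto w (𝓝[>] (0 : ℝ)) (𝓝 0) := by
    have := hf0.sub hrp0; simpa using this
  -- w δ < 0
  have hwδ : w δ < 0 := by
    have hCδ : C * δ ^ p = 1 := by
      simp only [hCdef]; field_simp
    simp only [hwdef, hCδ]
    linarith [(hf01 δ hδpos).2]
  -- choose a near 0 with w a < w r₀
  have hev2 : ∀ᶠ r in 𝓝[>] (0 : ℝ), w r < w r₀ :=
    hwlim.eventually (eventually_lt_nhds hw0)
  obtain ⟨a', ha'0, ha'⟩ := mem_nhdsGT_iff_exists_Ioo_subset.mp hev2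
  have ha'pos : 0 < a' := ha'0
  set a : ℝ := min a' r₀ / 2 with hadef
  have hapos : 0 < a := by positivity
  have har₀ : a < r₀ := by
    have := min_le_right a' r₀; simp only [hadef]; linarith [lt_min ha'pos hr₀pos]
  have haa' : a < a' := by
    have := min_le_left a' r₀; simp only [hadef]; linarith [lt_min ha'pos hr₀pos]
  have hwa : w a < w r₀ := ha' ⟨hapos, haa'⟩
  -- maximum on [a, δ]
  have haδ : a ≤ δ := by linarith
  have hwcont : ContinuousOn w (Icc a δ) := by
    intro x hx
    exact ((hw_deriv x (lt_of_lt_of_le hapos hx.1)).continuousAt).continuousWithinAt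
  obtain ⟨r₁, hr₁mem, hr₁max⟩ :=
    (isCompact_Icc).exists_isMaxOn (nonempty_Icc.mpr haδ) hwcont
  have hr₀mem : r₀ ∈ Icc a δ := ⟨har₀.le, hr₀δ.le⟩
  have hwr₁ : w r₀ ≤ w r₁ := hr₁max hr₀mem
  have hwr₁pos : 0 < w r₁ := lt_of_lt_of_le hw0 hwr₁
  have hr₁a : a < r₁ := by
    rcases lt_or_eq_of_le hr₁mem.1 with h | h
    · exact h
    · exfalso; rw [← h] at hwr₁; linarith
  have hr₁δ : r₁ < δ := by
    rcases lt_or_eq_of_le hr₁mem.2 with h | h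
    · exact h
    · exfalso; rw [h] at hwr₁pos; linarith
  have hr₁pos : 0 < r₁ := lt_trans hapos hr₁a
  -- local max ⇒ W r₁ = 0
  have hlocmax : IsLocalMax w r₁ := hr₁max.isLocalMax (Icc_mem_nhds hr₁a hr₁δ)
  have hW0 : W r₁ = 0 := hlocmax.hasDerivAt_eq_zero (hw_deriv r₁ hr₁pos)
  -- derivative of W at r₁
  set D : ℝ := (-(2 / r₁) * f' r₁ + β / r₁ ^ 2 * f r₁ * u r₁ ^ 2
      + γ * f r₁ * (f r₁ ^ 2 - 1)) - C * (p * ((p - 1) * r₁ ^ (p - 2))) with hDdef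
  have hW_deriv : HasDerivAt W D r₁ := by
    have h1 : HasDerivAt (fun x : ℝ => x ^ (p - 1)) ((p - 1) * r₁ ^ (p - 1 - 1)) r₁ :=
      Real.hasDerivAt_rpow_const (Or.inl hr₁pos.ne')
    have h2 : HasDerivAt (fun x : ℝ => C * (p * x ^ (p - 1)))
        (C * p * ((p - 1) * r₁ ^ (p - 1 - 1))) r₁ := by
      have := (h1.const_mul (C * p))
      simpa [mul_assoc] using this
    have h3 := ((hsol r₁ hr₁pos).2.2.2).sub h2
    have hexp : p - 1 - 1 = p - 2 := by ring
    rw [hexp] at h3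
    have hD' : D = -(2 / r₁) * f' r₁ + β / r₁ ^ 2 * f r₁ * u r₁ ^ 2 + γ * f r₁ * (f r₁ ^ 2 - 1)
        - C * p * ((p - 1) * r₁ ^ (p - 2)) := by rw [hDdef]; ring
    rw [hD']
    exact h3
  -- positivity of D
  have hfr₁ := hf01 r₁ hr₁pos
  have hβu : k < β * u r₁ ^ 2 := hδ₁ ⟨hr₁pos, lt_trans hr₁δ hδδ₁⟩
  have hγr₁ : γ * r₁ ^ 2 ≤ k - (p ^ 2 + p) := by
    have h1 : r₁ ^ 2 ≤ δ₂ ^ 2 :=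
      pow_le_pow_left₀ hr₁pos.le (le_of_lt (lt_trans hr₁δ hδδ₂)) 2
    have h2 := mul_le_mul_of_nonneg_left h1 hγ
    linarith
  have hfg : C * r₁ ^ p < f r₁ := by
    have := hwr₁pos; simp only [hwdef] at this; linarith
  have hf'r₁ : f' r₁ = C * (p * r₁ ^ (p - 1)) := by
    have := hW0; simp only [hWdef] at this; linarith
  have hA : r₁ ^ (p - 1) = r₁ ^ p / r₁ := by
    rw [Real.rpow_sub hr₁pos, Real.rpow_one]
  have hA2 : r₁ ^ (p - 2) = r₁ ^ p / r₁ ^ 2 := by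
    rw [Real.rpow_sub hr₁pos, show ((2:ℝ) = ((2:ℕ):ℝ)) by norm_num,
      Real.rpow_natCast]
  have hApos : 0 < r₁ ^ p := Real.rpow_pos_of_pos hr₁pos p
  have hDpos : 0 < D := by
    have hkey : D * r₁ ^ 2 = -2 * C * p * r₁ ^ p + β * f r₁ * u r₁ ^ 2
        + γ * f r₁ * (f r₁ ^ 2 - 1) * r₁ ^ 2 - C * p * (p - 1) * r₁ ^ p := by
      simp only [hDdef, hf'r₁, hA, hA2]
      field_simp
    have hr₁sq : (0:ℝ) < r₁ ^ 2 := by positivity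
    have h1 : k * f r₁ < β * f r₁ * u r₁ ^ 2 := by
      have := mul_lt_mul_of_pos_right hβu hfr₁.1
      linarith [this]
    have h2 : -(γ * r₁ ^ 2) * f r₁ ≤ γ * f r₁ * (f r₁ ^ 2 - 1) * r₁ ^ 2 := by
      have hcube : γ * f r₁ * (f r₁ ^ 2 - 1) * r₁ ^ 2 + (γ * r₁ ^ 2) * f r₁
          = γ * (f r₁ * f r₁ ^ 2 * r₁ ^ 2) := by ring
      have hnn : 0 ≤ γ * (f r₁ * f r₁ ^ 2 * r₁ ^ 2) :=
        mul_nonneg hγ (mul_nonneg (mul_nonneg hfr₁.1.le (sq_nonneg _)) (sq_nonneg _))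
      linarith
    have h3 : (p ^ 2 + p) * f r₁ ≤ k * f r₁ - (γ * r₁ ^ 2) * f r₁ := by
      have := mul_le_mul_of_nonneg_right hγr₁ hfr₁.1.le
      linarith [this]
    have hpp : (0:ℝ) < p ^ 2 + p := by positivity
    have h5 : (p ^ 2 + p) * (C * r₁ ^ p) < (p ^ 2 + p) * f r₁ :=
      mul_lt_mul_of_pos_left hfg hpp
    have h4 : 0 < D * r₁ ^ 2 := by
      rw [hkey]
      have hring : -2 * C * p * r₁ ^ p - C * p * (p - 1) * r₁ ^ p
          = -((p ^ 2 + p) * (C * r₁ ^ p)) := by ring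
      linarith
    rcases lt_or_ge 0 D with h | h
    · exact h
    · exfalso
      have := mul_le_mul_of_nonneg_right h hr₁sq.le
      simp only [zero_mul] at this
      linarith
  -- W is positive slightly to the right of r₁
  have hslope : Tendsto (slope W r₁) (𝓝[>] r₁) (𝓝 D) :=
    (hasDerivAt_iff_tendsto_slope.mp hW_deriv).mono_left
      (nhdsWithin_mono _ (by intro x hx; exact ne_of_gt hx))
  have hev3 : ∀ᶠ r in 𝓝[>] r₁, 0 < slope W r₁ r :=
    hslope.eventually (eventually_gt_nhds hDpos)
  obtain ⟨b, hb0, hb⟩ := mem_nhdsGT_iff_exists_Ioo_subset.mp hev3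
  have hbr₁ : r₁ < b := hb0
  have hWpos : ∀ r ∈ Ioo r₁ b, 0 < W r := by
    intro r hr
    have hs := hb hr
    simp only [mem_setOf_eq] at hs
    rw [slope_def_field, hW0] at hs
    have hrr₁ : 0 < r - r₁ := by linarith [hr.1]
    have hmul := mul_pos hs hrr₁
    rw [div_mul_cancel₀ _ hrr₁.ne'] at hmul
    linarith
  -- strict monotonicity on [r₁, m] gives contradiction with max
  set m : ℝ := min ((r₁ + b) / 2) ((r₁ + δ) / 2) with hmdef
  have hmr₁ : r₁ < m := by
    apply lt_min <;> linarith
  have hmb : m < b := by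
    have := min_le_left ((r₁ + b) / 2) ((r₁ + δ) / 2); linarith
  have hmδ : m < δ := by
    have := min_le_right ((r₁ + b) / 2) ((r₁ + δ) / 2); linarith
  have hmono : StrictMonoOn w (Icc r₁ m) := by
    apply strictMonoOn_of_deriv_pos (convex_Icc r₁ m)
    · intro x hx
      exact ((hw_deriv x (lt_of_lt_of_le hr₁pos hx.1)).continuousAt).continuousWithinAt
    · intro x hx
      rw [interior_Icc] at hx
      rw [(hw_deriv x (lt_trans hr₁pos hx.1)).deriv]
      exact hWpos x ⟨hx.1, lt_trans hx.2 hmb⟩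
  have hwm : w r₁ < w m := hmono ⟨le_refl _, hmr₁.le⟩ ⟨hmr₁.le, le_refl _⟩ hmr₁
  have hmmem : m ∈ Icc a δ := ⟨by linarith, hmδ.le⟩
  have := hr₁max hmmem
  simp only [mem_setOf_eq] at this
  linarith
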